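/- If θ lies in the row space R(X) of X and λ₁ denotes the smallest positive eigenvalue of XᵀX, then for any h > 0, ‖X(h⁻¹XᵀX + I_p)⁻¹θ‖² ≤ (h²/λ₁)‖θ‖²; i.e., the squared norm of X times the bias of the ridge regression estimator of θ is at most h²λ₁⁻¹‖θ‖². -/

import Mathlib

open Matrix

lemma orth_dot {p : ℕ} (U : Matrix (Fin p) (Fin p) ℝ) (hU : Uᵀ * U = 1)
    (x y : Fin p → ℝ) : (U *ᵥ x) ⬝ᵥ (U *ᵥ y) = x ⬝ᵥ y := by
  rw [dotProduct_mulVec, ← mulVec_transpose, mulVec_mulVec, hU, one_mulVec]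

lemma key_spectral {p : ℕ} (A : Matrix (Fin p) (Fin p) ℝ) (hA : A.PosSemidef)
    (lam1 : ℝ) (hpos : 0 < lam1)
    (hmin : ∀ i, hA.1.eigenvalues i = 0 ∨ lam1 ≤ hA.1.eigenvalues i)
    (b : Fin p → ℝ) :
    lam1 * (b ⬝ᵥ (A *ᵥ b)) ≤ (A *ᵥ b) ⬝ᵥ (A *ᵥ b) := by
  classical
  set U : Matrix (Fin p) (Fin p) ℝ := (hA.1.eigenvectorUnitary : Matrix (Fin p) (Fin p) ℝ)
  set μ := hA.1.eigenvalues with hμ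
  have hsU : star U = Uᵀ := by
    rw [Matrix.star_eq_conjTranspose, conjTranspose_eq_transpose_of_trivial]
  have hU1 : Uᵀ * U = 1 := by
    rw [← hsU]; exact (Matrix.mem_unitaryGroup_iff').mp hA.1.eigenvectorUnitary.2
  have hU2 : U * Uᵀ = 1 := by
    rw [← hsU]; exact (Matrix.mem_unitaryGroup_iff).mp hA.1.eigenvectorUnitary.2
  have hspec : A = U * diagonal μ * Uᵀ := by
    have := hA.1.spectral_theorem
    rw [Unitary.conjStarAlgAut_apply] at this
    rw [← hsU]
    exact this
  set c : Fin p → ℝ := Uᵀ *ᵥ b with hc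
  have hAb : A *ᵥ b = U *ᵥ (diagonal μ *ᵥ c) := by
    rw [hspec, ← mulVec_mulVec, ← mulVec_mulVec]
  have hb : b = U *ᵥ c := by
    rw [hc, mulVec_mulVec, hU2, one_mulVec]
  have e1 : b ⬝ᵥ (A *ᵥ b) = c ⬝ᵥ (diagonal μ *ᵥ c) := by
    rw [hAb]; nth_rewrite 1 [hb]; exact orth_dot U hU1 _ _
  have e2 : (A *ᵥ b) ⬝ᵥ (A *ᵥ b) = (diagonal μ *ᵥ c) ⬝ᵥ (diagonal μ *ᵥ c) := by
    rw [hAb]; exact orth_dot U hU1 _ _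
  rw [e1, e2]
  have hd : ∀ v : Fin p → ℝ, diagonal μ *ᵥ v = fun i => μ i * v i := by
    intro v; funext i; rw [mulVec_diagonal]
  rw [hd]
  simp only [dotProduct, Finset.mul_sum]
  apply Finset.sum_le_sum
  intro i _
  rcases hmin i with h0 | hge
  · simp [h0]
  · have hμnn : 0 ≤ μ i := le_trans hpos.le hge
    nlinarith [sq_nonneg (c i), mul_nonneg hμnn (sq_nonneg (c i))]

theorem ridge_bias_X_norm_sq_bound
    {n p : ℕ} (X : Matrix (Fin n) (Fin p) ℝ)
    (lam1 : ℝ) (hlam_pos : 0 < lam1)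
    (hlam_eig : Module.End.HasEigenvalue (Xᵀ * X).mulVecLin lam1)
    (hlam_min : ∀ lam : ℝ, 0 < lam →
      Module.End.HasEigenvalue (Xᵀ * X).mulVecLin lam → lam1 ≤ lam)
    (θ : Fin p → ℝ) (hθ : ∃ v : Fin n → ℝ, θ = Xᵀ *ᵥ v)
    (h : ℝ) (hh : 0 < h) :
    ∑ i, (X *ᵥ ((h⁻¹ • (Xᵀ * X) + 1)⁻¹ *ᵥ θ)) i ^ 2
      ≤ (h ^ 2 / lam1) * ∑ j, θ j ^ 2 := by
  classical
  set A : Matrix (Fin p) (Fin p) ℝ := Xᵀ * X with hAdef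
  have hA : A.PosSemidef := by
    have := Matrix.posSemidef_conjTranspose_mul_self X
    rwa [conjTranspose_eq_transpose_of_trivial] at this
  -- eigenvalues are either 0 or ≥ lam1
  have hmin : ∀ i, hA.1.eigenvalues i = 0 ∨ lam1 ≤ hA.1.eigenvalues i := by
    intro i
    rcases eq_or_lt_of_le (hA.eigenvalues_nonneg i) with h0 | hposi
    · exact Or.inl h0.symm
    · refine Or.inr (hlam_min _ hposi ?_)
      refine Module.End.hasEigenvalue_of_hasEigenvector
        (x := ⇑(hA.1.eigenvectorBasis i)) ⟨?_, ?_⟩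
      · rw [Module.End.mem_eigenspace_iff]
        exact hA.1.mulVec_eigenvectorBasis i
      · exact fun h0 => hA.1.eigenvectorBasis.orthonormal.ne_zero i (by simpa using congrArg (WithLp.toLp 2) h0)
  -- the matrix M is positive definite, hence invertible
  set M : Matrix (Fin p) (Fin p) ℝ := h⁻¹ • A + 1 with hMdef
  have hsmul : (h⁻¹ • A).PosSemidef := by
    refine Matrix.PosSemidef.of_dotProduct_mulVec_nonneg ?_ ?_
    · show (h⁻¹ • A)ᴴ = _
      rw [conjTranspose_smul, hA.1.eq]; simp
    · intro x
      rw [smul_mulVec, dotProduct_smul, smul_eq_mul]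
      exact mul_nonneg (inv_nonneg.mpr hh.le) (hA.dotProduct_mulVec_nonneg x)
  have hM : M.PosDef := Matrix.PosDef.posSemidef_add hsmul Matrix.PosDef.one
  have hdet : IsUnit M.det := hM.det_pos.ne'.isUnit
  set b : Fin p → ℝ := M⁻¹ *ᵥ θ with hbdef
  have hMb : M *ᵥ b = θ := by
    rw [hbdef, mulVec_mulVec, Matrix.mul_nonsing_inv _ hdet, one_mulVec]
  have hθeq : θ = h⁻¹ • (A *ᵥ b) + b := by
    rw [← hMb, hMdef, add_mulVec, smul_mulVec, one_mulVec]
  set w : Fin p → ℝ := A *ᵥ b with hwdef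
  -- LHS equals b ⬝ᵥ w
  have hLHS : ∑ i, (X *ᵥ b) i ^ 2 = b ⬝ᵥ w := by
    have : (X *ᵥ b) ⬝ᵥ (X *ᵥ b) = b ⬝ᵥ w := by
      rw [dotProduct_mulVec, ← mulVec_transpose, hwdef, hAdef, ← mulVec_mulVec,
        dotProduct_comm]
    rw [← this]
    simp [dotProduct, sq]
  -- scalar facts
  have ht : 0 ≤ b ⬝ᵥ w := by
    have := hA.dotProduct_mulVec_nonneg b
    simpa using this
  have hnb : 0 ≤ b ⬝ᵥ b := Finset.sum_nonneg fun i _ => mul_self_nonneg _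
  have hθb : θ ⬝ᵥ b = h⁻¹ * (b ⬝ᵥ w) + b ⬝ᵥ b := by
    nth_rewrite 1 [hθeq]
    rw [add_dotProduct, smul_dotProduct, smul_eq_mul, dotProduct_comm w b]
  have hwθ : w = h • (θ - b) := by
    have : θ - b = h⁻¹ • w := by rw [hθeq]; abel
    rw [this, smul_smul, mul_inv_cancel₀ hh.ne', one_smul]
  have hnθ : θ ⬝ᵥ θ = ∑ j, θ j ^ 2 := by simp [dotProduct, sq]
  have hsub : (θ - b) ⬝ᵥ (θ - b) = θ ⬝ᵥ θ - 2 * (θ ⬝ᵥ b) + b ⬝ᵥ b := by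
    rw [sub_dotProduct, dotProduct_sub, dotProduct_sub, dotProduct_comm b θ]; ring
  have hs : w ⬝ᵥ w = h ^ 2 * ((θ - b) ⬝ᵥ (θ - b)) := by
    rw [hwθ, smul_dotProduct, dotProduct_smul, smul_eq_mul, smul_eq_mul]; ring
  have hkey : lam1 * (b ⬝ᵥ w) ≤ w ⬝ᵥ w := key_spectral A hA lam1 hlam_pos hmin b
  have hinv : 0 < h⁻¹ := inv_pos.mpr hh
  rw [hLHS, ← hnθ]
  have hsle : w ⬝ᵥ w ≤ h ^ 2 * (θ ⬝ᵥ θ) := by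
    have h2 : h ^ 2 * h⁻¹ = h := by rw [sq, mul_assoc, mul_inv_cancel₀ hh.ne', mul_one]
    rw [hs, hsub, hθb]
    nlinarith [mul_nonneg hh.le ht, mul_nonneg (sq_nonneg h) hnb, h2]
  rw [div_mul_eq_mul_div, le_div_iff₀ hlam_pos]
  nlinarith
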